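/- For every k-edge-colored adjacency matrix A there exists an adjacency matrix A' isomorphic to A (by a vertex permutation) such that the degree matrix α(A') has lexicographically non-increasing rows after a suitable column permutation and the symmetry-breaking predicate sb*_ℓ(A', α(A')) holds. -/

import Mathlib

/-- The degree of vertex `v` in color `c` for a `k`-edge-coloring `κ` of `K_n`. -/
def degc {n k : ℕ} (κ : Fin n → Fin n → Fin k) (c : Fin k) (v : Fin n) : ℕ :=
  (Finset.univ.filter (fun u => u ≠ v ∧ κ v u = c)).card

/-- There is a monochromatic clique of size `m` in color `c` inside the vertex set `S`. -/
def monoCliqueIn {n k : ℕ} (κ : Fin n → Fin n → Fin k) (c : Fin k) (m : ℕ)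
    (S : Finset (Fin n)) : Prop :=
  ∃ T ⊆ S, T.card = m ∧ ∀ u ∈ T, ∀ v ∈ T, u ≠ v → κ u v = c

/-- There is a monochromatic clique of size `m` in color `c`. -/
def monoClique {n k : ℕ} (κ : Fin n → Fin n → Fin k) (c : Fin k) (m : ℕ) : Prop :=
  monoCliqueIn κ c m Finset.univ

/-- The set of `c`-colored neighbors of `v`. -/
def nbhd {n k : ℕ} (κ : Fin n → Fin n → Fin k) (c : Fin k) (v : Fin n) : Finset (Fin n) :=
  Finset.univ.filter (fun u => u ≠ v ∧ κ v u = c)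

/-- The degree matrix of a coloring: entry `(i,j)` is the degree of vertex `i` in color `j`. -/
def degMatrix {n k : ℕ} (κ : Fin n → Fin n → Fin k) : Fin n → Fin k → ℕ :=
  fun i j => degc κ j i

/-- Simultaneously permuting rows and columns of an adjacency matrix by `π`. -/
def permMat {n k : ℕ} (π : Equiv.Perm (Fin n)) (A : Fin n → Fin n → Fin k) :
    Fin n → Fin n → Fin k :=
  fun i j => A (π.symm i) (π.symm j)

/-- Row `r` of `A` as a list, after simultaneously omitting positions `i` and `j`. -/
def restrictedRow {n k : ℕ} (A : Fin n → Fin n → Fin k) (r i j : Fin n) : List (Fin k) :=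
  ((List.finRange n).filter (fun t => t ≠ i ∧ t ≠ j)).map (A r)

/-- The symmetry-breaking predicate `sb*_ℓ(A, M)`: whenever rows `i < j` of the degree
matrix `M` are equal, row `i` of `A` is lexicographically at most row `j` of `A` after
simultaneously omitting positions `i` and `j`. -/
def sbStar {n k : ℕ} (A : Fin n → Fin n → Fin k) (M : Fin n → Fin k → ℕ) : Prop :=
  ∀ i j : Fin n, i < j → (∀ c, M i c = M j c) →
    restrictedRow A i i j ≤ restrictedRow A j i j

namespace SbAux

variable {α β : Type*} [LinearOrder α] [LinearOrder β]

lemma map_lt_map_of_exists {f g : α → β} :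
    ∀ l : List α, l.Pairwise (· < ·) →
      ∀ a, a ∈ l → g a < f a → (∀ b ∈ l, b < a → g b = f b) →
        l.map g < l.map f := by
  intro l
  induction l with
  | nil => intro _ a ha _ _; exact absurd ha List.not_mem_nil
  | cons x t ih =>
    intro hp a ha hlt he
    rcases List.mem_cons.1 ha with rfl | hat
    · exact List.Lex.rel hlt
    · have hx : g x = f x :=
        he x List.mem_cons_self ((List.pairwise_cons.1 hp).1 a hat)
      have ht : t.map g < t.map f :=
        ih (List.pairwise_cons.1 hp).2 a hat hlt
          (fun b hb hba => he b (List.mem_cons_of_mem x hb) hba)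
      rw [List.map_cons, List.map_cons, hx]
      exact List.Lex.cons ht

lemma exists_of_map_lt {f g : α → β} :
    ∀ l : List α, l.Pairwise (· < ·) → l.map g < l.map f →
      ∃ a, a ∈ l ∧ g a < f a ∧ ∀ b ∈ l, b < a → g b = f b := by
  intro l
  induction l with
  | nil => intro _ h; cases h
  | cons x t ih =>
    intro hp h
    rw [List.map_cons, List.map_cons] at h
    rcases lt_trichotomy (g x) (f x) with hx | hx | hx
    · refine ⟨x, List.mem_cons_self, hx, ?_⟩
      intro b hb hbx
      rcases List.mem_cons.1 hb with rfl | hbt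
      · exact absurd hbx (lt_irrefl _)
      · exact absurd hbx (not_lt_of_gt ((List.pairwise_cons.1 hp).1 b hbt))
    · rw [hx] at h
      have h' : t.map g < t.map f := ((List.cons_lt_cons_iff.1 h).resolve_left (lt_irrefl _)).2
      obtain ⟨a, hat, hlt, he⟩ := ih (List.pairwise_cons.1 hp).2 h'
      refine ⟨a, List.mem_cons_of_mem x hat, hlt, ?_⟩
      intro b hb hba
      rcases List.mem_cons.1 hb with rfl | hbt
      · exact hx
      · exact he b hbt hba
    · exact absurd h (lt_asymm (List.Lex.rel hx : (f x :: t.map f) < (g x :: t.map g)))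

end SbAux

/-- All pairs `(r, c)` with `r < c`, listed in lexicographic order. -/
def pairList (n : ℕ) : List (Fin n ×ₗ Fin n) :=
  (List.finRange n).flatMap fun r =>
    ((List.finRange n).filter (fun c => r < c)).map (fun c => toLex (r, c))

lemma pairList_pairwise (n : ℕ) : (pairList n).Pairwise (· < ·) := by
  unfold pairList
  rw [List.pairwise_flatMap]
  constructor
  · intro r _
    rw [List.pairwise_map]
    refine ((List.pairwise_lt_finRange n).filter _).imp ?_
    intro a b hab
    exact Prod.Lex.lt_iff.2 (Or.inr ⟨rfl, hab⟩)
  · refine (List.pairwise_lt_finRange n).imp ?_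
    intro r1 r2 h12 x hx y hy
    obtain ⟨c1, _, rfl⟩ := List.mem_map.1 hx
    obtain ⟨c2, _, rfl⟩ := List.mem_map.1 hy
    exact Prod.Lex.lt_iff.2 (Or.inl h12)

lemma mem_pairList {n : ℕ} {r c : Fin n} (h : r < c) : toLex (r, c) ∈ pairList n := by
  unfold pairList
  rw [List.mem_flatMap]
  exact ⟨r, List.mem_finRange r,
    List.mem_map.2 ⟨c, List.mem_filter.2 ⟨List.mem_finRange c, by simpa using h⟩, rfl⟩⟩

lemma pairList_shape {n : ℕ} {p : Fin n ×ₗ Fin n} (hp : p ∈ pairList n) :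
    (ofLex p).1 < (ofLex p).2 := by
  unfold pairList at hp
  rw [List.mem_flatMap] at hp
  obtain ⟨r, -, hp⟩ := hp
  obtain ⟨c, hc, rfl⟩ := List.mem_map.1 hp
  have h2 := (List.mem_filter.1 hc).2
  simpa using h2

/-- The strict upper triangle of a matrix, read in lexicographic order of positions. -/
def matKey {n k : ℕ} (A : Fin n → Fin n → Fin k) : List (Fin k) :=
  (pairList n).map (fun p => A (ofLex p).1 (ofLex p).2)

lemma degc_permMat {n k : ℕ} (π : Equiv.Perm (Fin n)) (A : Fin n → Fin n → Fin k)
    (c : Fin k) (v : Fin n) : degc (permMat π A) c v = degc A c (π.symm v) := by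
  unfold degc
  refine Finset.card_equiv (π.symm : Fin n ≃ Fin n) ?_
  intro u
  simp only [Finset.mem_filter]
  simp [permMat, Equiv.apply_eq_iff_eq]

/-- Core lemma: if the sb* condition is violated at `(i,j)`, then swapping `i` and `j`
strictly decreases the upper-triangle key. -/
lemma matKey_swap_lt {n k : ℕ} (A' : Fin n → Fin n → Fin k)
    (hs : ∀ u v, A' u v = A' v u) (i j : Fin n) (hij : i < j)
    (hv : restrictedRow A' j i j < restrictedRow A' i i j) :
    matKey (fun r t => A' (Equiv.swap i j r) (Equiv.swap i j t)) < matKey A' := by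
  have hne : i ≠ j := ne_of_lt hij
  set s := Equiv.swap i j with hsdef
  have hsi : s i = j := Equiv.swap_apply_left i j
  have hsj : s j = i := Equiv.swap_apply_right i j
  have hsfix : ∀ t : Fin n, t ≠ i → t ≠ j → s t = t := fun t h1 h2 =>
    Equiv.swap_apply_of_ne_of_ne h1 h2
  unfold restrictedRow at hv
  have hl : ((List.finRange n).filter (fun t => t ≠ i ∧ t ≠ j)).Pairwise (· < ·) :=
    (List.pairwise_lt_finRange n).filter _
  obtain ⟨t0, ht0l, ht0lt, ht0e⟩ := SbAux.exists_of_map_lt _ hl hv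
  have ht0mem := List.mem_filter.1 ht0l
  have ht0ij : t0 ≠ i ∧ t0 ≠ j := by simpa using ht0mem.2
  have he : ∀ t : Fin n, t ≠ i → t ≠ j → t < t0 → A' j t = A' i t := by
    intro t h1 h2 h3
    exact ht0e t (List.mem_filter.2 ⟨List.mem_finRange t, by simp [h1, h2]⟩) h3
  -- symmetric version
  have he' : ∀ t : Fin n, t ≠ i → t ≠ j → t < t0 → A' t j = A' t i := by
    intro t h1 h2 h3
    rw [hs t j, hs t i]; exact he t h1 h2 h3
  unfold matKey
  rcases lt_or_gt_of_ne ht0ij.1 with hti | hti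
  · -- case t0 < i, witness pair (t0, i)
    refine SbAux.map_lt_map_of_exists _ (pairList_pairwise n) (toLex (t0, i))
      (mem_pairList hti) ?_ ?_
    · show A' (s t0) (s i) < A' t0 i
      rw [hsfix t0 ht0ij.1 ht0ij.2, hsi, hs t0 j, hs t0 i]
      exact ht0lt
    · intro b hb hba
      have hrc0 := pairList_shape hb
      rcases hbeq : ofLex b with ⟨r, c⟩
      have hb2 : b = toLex (r, c) := by rw [← hbeq, toLex_ofLex]
      have hrc : r < c := by rw [hbeq] at hrc0; exact hrc0
      rw [hb2] at hba
      have hba' : r < t0 ∨ (r = t0 ∧ c < i) := Prod.Lex.lt_iff.1 hba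
      show A' (s r) (s c) = A' r c
      have hrt0 : r ≤ t0 := by
        rcases hba' with h | ⟨h, _⟩
        · exact le_of_lt h
        · exact le_of_eq h
      have hri : r ≠ i := ne_of_lt (lt_of_le_of_lt hrt0 hti)
      have hrj : r ≠ j := ne_of_lt (lt_trans (lt_of_le_of_lt hrt0 hti) hij)
      rw [hsfix r hri hrj]
      rcases eq_or_ne c i with hcie | hci
      · -- c = i : need r < t0 strictly
        have hrlt : r < t0 := by
          rcases hba' with h | ⟨_, h⟩
          · exact h
          · rw [hcie] at h; exact absurd h (lt_irrefl _)
        rw [hcie, hsi]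
        exact he' r hri hrj hrlt
      rcases eq_or_ne c j with hcje | hcj
      · have hrlt : r < t0 := by
          rcases hba' with h | ⟨_, h⟩
          · exact h
          · rw [hcje] at h; exact absurd hij (not_lt_of_gt h)
        rw [hcje, hsj]
        exact (he' r hri hrj hrlt).symm
      · rw [hsfix c hci hcj]
  · -- case i < t0, witness pair (i, t0)
    refine SbAux.map_lt_map_of_exists _ (pairList_pairwise n) (toLex (i, t0))
      (mem_pairList hti) ?_ ?_
    · show A' (s i) (s t0) < A' i t0
      rw [hsfix t0 ht0ij.1 ht0ij.2, hsi]
      exact ht0lt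
    · intro b hb hba
      have hrc0 := pairList_shape hb
      rcases hbeq : ofLex b with ⟨r, c⟩
      have hb2 : b = toLex (r, c) := by rw [← hbeq, toLex_ofLex]
      have hrc : r < c := by rw [hbeq] at hrc0; exact hrc0
      rw [hb2] at hba
      have hba' : r < i ∨ (r = i ∧ c < t0) := Prod.Lex.lt_iff.1 hba
      show A' (s r) (s c) = A' r c
      rcases hba' with hlt | ⟨hre, hct0⟩
      · -- r < i
        have hri : r ≠ i := ne_of_lt hlt
        have hrj : r ≠ j := ne_of_lt (lt_trans hlt hij)
        have hrt0 : r < t0 := lt_trans hlt hti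
        rw [hsfix r hri hrj]
        rcases eq_or_ne c i with hcie | hci
        · rw [hcie, hsi]; exact he' r hri hrj hrt0
        rcases eq_or_ne c j with hcje | hcj
        · rw [hcje, hsj]; exact (he' r hri hrj hrt0).symm
        · rw [hsfix c hci hcj]
      · -- r = i, c < t0
        have hci : c ≠ i := by rw [hre] at hrc; exact ne_of_gt hrc
        rw [hre, hsi]
        rcases eq_or_ne c j with hcje | hcj
        · rw [hcje, hsj, hs j i]
        · rw [hsfix c hci hcj]
          exact he c hci hcj hct0

/-- The row-sortedness predicate for a permutation. -/
def sortedDeg {n k : ℕ} (A : Fin n → Fin n → Fin k) (π : Equiv.Perm (Fin n)) : Prop :=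
  ∀ i j : Fin n, i ≤ j →
    (List.ofFn fun c => degMatrix (permMat π A) j c) ≤
      (List.ofFn fun c => degMatrix (permMat π A) i c)

/-- Every coloring has an isomorphic copy whose degree matrix has lexicographically
non-increasing rows after a suitable column permutation, and which satisfies the
symmetry-breaking predicate with respect to its own degree matrix. -/
theorem exists_iso_sorted_sbStar {n k : ℕ} (A : Fin n → Fin n → Fin k)
    (hsym : ∀ u v, A u v = A v u) :
    ∃ (π : Equiv.Perm (Fin n)) (σ : Equiv.Perm (Fin k)),
      (∀ i j : Fin n, i ≤ j →
        List.ofFn (fun c => degMatrix (permMat π A) j (σ c)) ≤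
          List.ofFn (fun c => degMatrix (permMat π A) i (σ c))) ∧
      sbStar (permMat π A) (degMatrix (permMat π A)) := by
  classical
  have hofn : ∀ (π : Equiv.Perm (Fin n)) (r : Fin n),
      (List.ofFn fun c => degMatrix (permMat π A) r c) =
        (List.ofFn fun c => degMatrix A (π.symm r) c) := by
    intro π r
    congr 1
    funext c
    exact degc_permMat π A c r
  set g : Fin n → (List ℕ)ᵒᵈ :=
    fun r => OrderDual.toDual (List.ofFn fun c => degMatrix A r c) with hg
  have hP0 : sortedDeg A (Tuple.sort g).symm := by
    intro i j hij
    rw [hofn, hofn]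
    simp only [Equiv.symm_symm]
    exact OrderDual.toDual_le_toDual.1 (Tuple.monotone_sort g hij)
  have hS : (Finset.univ.filter (sortedDeg A)).Nonempty :=
    ⟨(Tuple.sort g).symm, Finset.mem_filter.2 ⟨Finset.mem_univ _, hP0⟩⟩
  obtain ⟨π₀, hπ₀, hmin⟩ :=
    Finset.exists_min_image (Finset.univ.filter (sortedDeg A))
      (fun π => matKey (permMat π A)) hS
  have hπ₀P : sortedDeg A π₀ := (Finset.mem_filter.1 hπ₀).2
  refine ⟨π₀, 1, ?_, ?_⟩
  · intro i j hij
    simpa using hπ₀P i j hij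
  · intro i j hij hdeg
    by_contra hnot
    have hv : restrictedRow (permMat π₀ A) j i j < restrictedRow (permMat π₀ A) i i j :=
      lt_of_not_ge hnot
    have hs' : ∀ u v, permMat π₀ A u v = permMat π₀ A v u := fun u v => hsym _ _
    set s := Equiv.swap i j with hsdef
    set π' : Equiv.Perm (Fin n) := (s.trans π₀.symm).symm with hπ'
    have hPM : permMat π' A = fun r t => permMat π₀ A (s r) (s t) := by
      funext r t
      simp [permMat, hπ', Equiv.trans_apply]
    have hkey : matKey (permMat π' A) < matKey (permMat π₀ A) := by
      rw [hPM]
      exact matKey_swap_lt (permMat π₀ A) hs' i j hij hv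
    have hDM : ∀ r c, degMatrix (permMat π' A) r c = degMatrix (permMat π₀ A) r c := by
      intro r c
      have h1 : degMatrix (permMat π' A) r c = degMatrix (permMat π₀ A) (s r) c := by
        unfold degMatrix
        rw [degc_permMat, degc_permMat]
        congr 1
      rw [h1]
      rcases eq_or_ne r i with rfl | hri
      · rw [Equiv.swap_apply_left]
        exact (hdeg c).symm
      rcases eq_or_ne r j with rfl | hrj
      · rw [Equiv.swap_apply_right]
        exact hdeg c
      · rw [Equiv.swap_apply_of_ne_of_ne hri hrj]
    have hP' : sortedDeg A π' := by
      intro a b hab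
      have e1 : (List.ofFn fun c => degMatrix (permMat π' A) b c) =
          (List.ofFn fun c => degMatrix (permMat π₀ A) b c) := by
        congr 1; funext c; exact hDM b c
      have e2 : (List.ofFn fun c => degMatrix (permMat π' A) a c) =
          (List.ofFn fun c => degMatrix (permMat π₀ A) a c) := by
        congr 1; funext c; exact hDM a c
      rw [e1, e2]
      exact hπ₀P a b hab
    have hge : matKey (permMat π₀ A) ≤ matKey (permMat π' A) :=
      hmin π' (Finset.mem_filter.2 ⟨Finset.mem_univ _, hP'⟩)
    exact absurd hkey (not_lt_of_ge hge)
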